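/- Let A ∈ ℝ^{m×n} (m ≥ n), d ∈ ℝ^m, μ ∈ ℝ^n, let R ∈ ℝ^{m×m} and Q ∈ ℝ^{n×n} be symmetric positive definite, and let λ ∈ ℝ. Suppose U_R ∈ ℝ^{m×m} with U_Rᵀ R⁻¹ U_R = I_m, V_Q ∈ ℝ^{n×n} with V_Qᵀ Q⁻¹ V_Q = I_n, and U_R⁻¹ A V_Q = Σ where Σ ∈ ℝ^{m×n} has Σ_{ij} = 0 for i ≠ j and diagonal entries σ̂_1, ..., σ̂_n > 0. Set b = d − A μ and let ū_j, v̄_j denote the columns of U_R and V_Q. Then the vector s_λ = μ + Σ_{j=1}^n [σ̂_j² / (σ̂_j² + λ²)] · (ū_jᵀ R⁻¹ b / σ̂_j) · v̄_j satisfies the normal equations (Aᵀ R⁻¹ A + λ² Q⁻¹) s_λ = Aᵀ R⁻¹ d + λ² Q⁻¹ μ; i.e., the MAP estimate is a filtered GSVD solution with Tikhonov filter factors σ̂_j²/(σ̂_j² + λ²). -/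

import Mathlib

open Matrix

theorem stmt_10 {m n : ℕ} (hmn : n ≤ m) (A : Matrix (Fin m) (Fin n) ℝ)
    (d : Fin m → ℝ) (μ : Fin n → ℝ)
    (R UR : Matrix (Fin m) (Fin m) ℝ) (Q VQ : Matrix (Fin n) (Fin n) ℝ)
    (Sg : Matrix (Fin m) (Fin n) ℝ)
    (hR : R.PosDef) (hQ : Q.PosDef) (lam : ℝ)
    (hURu : IsUnit UR) (hVQu : IsUnit VQ)
    (hUR : URᵀ * R⁻¹ * UR = 1) (hVQ : VQᵀ * Q⁻¹ * VQ = 1)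
    (hGSVD : UR⁻¹ * A * VQ = Sg)
    (hdiag : ∀ (i : Fin m) (j : Fin n), (i : ℕ) ≠ (j : ℕ) → Sg i j = 0)
    (hpos : ∀ j : Fin n, 0 < Sg (Fin.castLE hmn j) j) :
    (Aᵀ * R⁻¹ * A + lam ^ 2 • Q⁻¹) *ᵥ
        (μ + ∑ j : Fin n,
          ((Sg (Fin.castLE hmn j) j ^ 2 / (Sg (Fin.castLE hmn j) j ^ 2 + lam ^ 2)) *
            (((fun i : Fin m => UR i (Fin.castLE hmn j)) ⬝ᵥ (R⁻¹ *ᵥ (d - A *ᵥ μ))) /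
              Sg (Fin.castLE hmn j) j)) • (fun i : Fin n => VQ i j))
      = (Aᵀ * R⁻¹) *ᵥ d + lam ^ 2 • (Q⁻¹ *ᵥ μ) := by
  set b : Fin m → ℝ := d - A *ᵥ μ with hb
  set σ : Fin n → ℝ := fun j => Sg (Fin.castLE hmn j) j with hσ
  set c : Fin n → ℝ := fun j =>
    (σ j ^ 2 / (σ j ^ 2 + lam ^ 2)) *
      (((fun i : Fin m => UR i (Fin.castLE hmn j)) ⬝ᵥ (R⁻¹ *ᵥ b)) / σ j) with hc
  -- the sum is VQ *ᵥ c
  have hsum : (∑ j : Fin n, c j • (fun i : Fin n => VQ i j)) = VQ *ᵥ c := by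
    funext i
    simp [mulVec, dotProduct, Finset.sum_apply, mul_comm]
  -- invertibility facts
  have hURue := hURu
  have hVQinv : VQ⁻¹ * VQ = 1 := nonsing_inv_mul VQ ((isUnit_iff_isUnit_det VQ).mp hVQu)
  have hVQinv' : VQ * VQ⁻¹ = 1 := mul_nonsing_inv VQ ((isUnit_iff_isUnit_det VQ).mp hVQu)
  have hURinv : UR⁻¹ * UR = 1 := nonsing_inv_mul UR ((isUnit_iff_isUnit_det UR).mp hURu)
  have hURinv' : UR * UR⁻¹ = 1 := mul_nonsing_inv UR ((isUnit_iff_isUnit_det UR).mp hURu)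
  -- (VQᵀ)⁻¹ = Q⁻¹ * VQ
  have hQVQ : (VQᵀ)⁻¹ = Q⁻¹ * VQ := inv_eq_right_inv (by rw [← Matrix.mul_assoc, hVQ])
  have hRUR : (URᵀ)⁻¹ = R⁻¹ * UR := inv_eq_right_inv (by rw [← Matrix.mul_assoc, hUR])
  -- A * VQ = UR * Sg
  have hAVQ : A * VQ = UR * Sg := by
    have := congrArg (fun M => UR * M) hGSVD
    simpa [← Matrix.mul_assoc, hURinv'] using this
  -- UR⁻¹ * A = Sg * VQ⁻¹
  have hUA : UR⁻¹ * A = Sg * VQ⁻¹ := by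
    have := congrArg (fun M => M * VQ⁻¹) hGSVD
    simpa [Matrix.mul_assoc, hVQinv'] using this
  -- key matrix identity
  have hM : (Aᵀ * R⁻¹ * A + lam ^ 2 • Q⁻¹) * VQ
      = (VQᵀ)⁻¹ * (Sgᵀ * Sg) + lam ^ 2 • (VQᵀ)⁻¹ := by
    have h1 : Aᵀ * R⁻¹ * A * VQ = (VQᵀ)⁻¹ * (Sgᵀ * Sg) := by
      calc Aᵀ * R⁻¹ * A * VQ = Aᵀ * (R⁻¹ * UR) * Sg := by
            rw [Matrix.mul_assoc (Aᵀ * R⁻¹), hAVQ, ← Matrix.mul_assoc, Matrix.mul_assoc Aᵀ]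
        _ = (UR⁻¹ * A)ᵀ * Sg := by
            rw [← hRUR, ← transpose_nonsing_inv, Matrix.transpose_mul]
        _ = (VQᵀ)⁻¹ * (Sgᵀ * Sg) := by
            rw [hUA, Matrix.transpose_mul, transpose_nonsing_inv, Matrix.mul_assoc]
    rw [Matrix.add_mul, h1, Matrix.smul_mul, hQVQ]
  -- diagonal structure: Sgᵀ * Sg = diagonal (σ·σ)
  have hSS : Sgᵀ * Sg = diagonal (fun j => σ j ^ 2) := by
    ext j i
    rw [Matrix.mul_apply]
    by_cases h : j = i
    · subst h
      rw [Finset.sum_eq_single (Fin.castLE hmn j)]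
      · simp [diagonal, sq]; rfl
      · intro k _ hk
        have : (k : ℕ) ≠ (j : ℕ) := by
          intro hkj; apply hk; ext; simp [hkj]
        simp [transpose_apply, hdiag k j this]
      · simp
    · have hz : ∀ k ∈ Finset.univ, Sgᵀ j k * Sg k i = 0 := by
        intro k _
        by_cases hkj : (k : ℕ) = (j : ℕ)
        · have hki : (k : ℕ) ≠ (i : ℕ) := by
            rw [hkj]; exact fun hji => h (Fin.ext hji)
          simp [transpose_apply, hdiag k i hki]
        · simp [transpose_apply, hdiag k j hkj]
      rw [Finset.sum_eq_zero hz, diagonal_apply_ne _ h]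
  -- Sgᵀ applied to a vector
  have hSgT : ∀ y : Fin m → ℝ, Sgᵀ *ᵥ y = fun j => σ j * y (Fin.castLE hmn j) := by
    intro y
    funext j
    rw [mulVec, dotProduct, Finset.sum_eq_single (Fin.castLE hmn j)]
    · rfl
    · intro k _ hk
      have : (k : ℕ) ≠ (j : ℕ) := by intro hkj; apply hk; ext; simp [hkj]
      simp [transpose_apply, hdiag k j this]
    · simp
  -- UR⁻¹ = URᵀ * R⁻¹
  have hURT : UR⁻¹ = URᵀ * R⁻¹ := inv_eq_left_inv hUR
  -- Aᵀ * R⁻¹ factorization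
  have hAR : Aᵀ * R⁻¹ = VQᵀ⁻¹ * Sgᵀ * UR⁻¹ := by
    have h2 : Aᵀ * (R⁻¹ * UR) = VQᵀ⁻¹ * Sgᵀ := by
      rw [← hRUR, ← transpose_nonsing_inv, ← Matrix.transpose_mul, hUA,
        Matrix.transpose_mul, transpose_nonsing_inv]
    calc Aᵀ * R⁻¹ = Aᵀ * (R⁻¹ * UR) * UR⁻¹ := by
          rw [Matrix.mul_assoc Aᵀ, Matrix.mul_assoc R⁻¹, hURinv', Matrix.mul_one]
      _ = VQᵀ⁻¹ * Sgᵀ * UR⁻¹ := by rw [h2]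
  -- key vector identity
  have hkey : (Sgᵀ * Sg) *ᵥ c + lam ^ 2 • c = Sgᵀ *ᵥ (UR⁻¹ *ᵥ b) := by
    rw [hSS, hSgT]
    funext j
    have hσj : σ j ≠ 0 := (hpos j).ne'
    have hden : σ j ^ 2 + lam ^ 2 ≠ 0 :=
      (add_pos_of_pos_of_nonneg (pow_pos (hpos j) 2) (sq_nonneg _)).ne'
    have hub : (UR⁻¹ *ᵥ b) (Fin.castLE hmn j)
        = (fun i : Fin m => UR i (Fin.castLE hmn j)) ⬝ᵥ (R⁻¹ *ᵥ b) := by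
      rw [hURT, ← mulVec_mulVec]
      simp [mulVec, dotProduct, transpose_apply]
    simp only [Pi.add_apply, Pi.smul_apply, mulVec_diagonal, smul_eq_mul, hc, hub]
    field_simp
  -- finish
  have hSc : (VQᵀ⁻¹ * (Sgᵀ * Sg) + lam ^ 2 • VQᵀ⁻¹) *ᵥ c
      = (Aᵀ * R⁻¹) *ᵥ d - (Aᵀ * R⁻¹) *ᵥ (A *ᵥ μ) := by
    rw [add_mulVec, smul_mulVec, ← mulVec_mulVec, ← mulVec_smul, ← mulVec_add, hkey,
      mulVec_mulVec, mulVec_mulVec, ← hAR, hb, mulVec_sub]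
  rw [hsum, mulVec_add, mulVec_mulVec, hM, hSc, add_mulVec, smul_mulVec,
    ← mulVec_mulVec]
  abel
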